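/- For every nonnegative integer n and real x, sum over k from 0 to n of s(n,k) * B_k(x) equals n! times sum over k from 0 to n of binomial(x,k) * (-1)^{n-k} / (n-k+1), where B_k(x) are Bernoulli polynomials. -/

import Mathlib

/-- Unsigned Stirling numbers of the first kind. -/
def S1u : ℕ → ℕ → ℕ
  | 0, 0 => 1
  | 0, _ + 1 => 0
  | _ + 1, 0 => 0
  | n + 1, k + 1 => n * S1u n (k + 1) + S1u n k

/-- Generalized binomial coefficient `x(x-1)⋯(x-k+1)/k!` for real `x`. -/
noncomputable def genBinom (x : ℝ) (k : ℕ) : ℝ :=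
  (∏ i ∈ Finset.range k, (x - i)) / (Nat.factorial k)

open Finset Polynomial

/-! ### Stirling number basics -/

lemma S1u_gt : ∀ {n k : ℕ}, n < k → S1u n k = 0
  | 0, _+1, _ => rfl
  | n+1, k+1, h => by
    show n * S1u n (k+1) + S1u n k = 0
    rw [S1u_gt (by omega), S1u_gt (by omega)]; simp

lemma S1u_succ_one (n : ℕ) : S1u (n+1) 1 = n.factorial := by
  induction n with
  | zero => rfl
  | succ n ih =>
    show (n+1) * S1u (n+1) 1 + S1u (n+1) 0 = _
    rw [ih]
    show (n+1) * n.factorial + 0 = _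
    rw [Nat.factorial_succ]; ring

lemma sc_rec {R : Type*} [CommRing R] (n k : ℕ) (hk : k ≤ n) :
    (-1:R)^(n+1-(k+1)) * S1u (n+1) (k+1)
      = (-1:R)^(n-k) * S1u n k - n * ((-1:R)^(n-(k+1)) * S1u n (k+1)) := by
  rcases eq_or_lt_of_le hk with rfl | h
  · have h1 : S1u (k+1) (k+1) = k * S1u k (k+1) + S1u k k := rfl
    simp [h1, S1u_gt (Nat.lt_succ_self k)]
  · have h1 : n - k = (n - (k+1)) + 1 := by omega
    rw [Nat.succ_sub_succ, show S1u (n+1) (k+1) = n * S1u n (k+1) + S1u n k from rfl, h1]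
    push_cast
    ring

lemma natmul_S1u_zero {R : Type*} [CommRing R] (n : ℕ) : (n : R) * S1u n 0 = 0 := by
  cases n with
  | zero => simp
  | succ n => show _ * ((S1u (n+1) 0 : ℕ) : R) = 0; rw [show S1u (n+1) 0 = 0 from rfl]; simp

/-- The falling factorial expansion via signed Stirling numbers of the first kind. -/
lemma fall_eq {R : Type*} [CommRing R] (n : ℕ) (x : R) :
    ∑ k ∈ Finset.range (n+1), (-1:R)^(n-k) * S1u n k * x^k
      = ∏ i ∈ Finset.range n, (x - i) := by
  induction n with
  | zero => simp [show S1u 0 0 = 1 from rfl]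
  | succ n ih =>
    rw [prod_range_succ, ← ih, Finset.sum_range_succ' _ (n+1)]
    rw [show S1u (n+1) 0 = 0 from rfl]
    have key : ∀ k ∈ Finset.range (n+1),
        (-1:R)^(n+1-(k+1)) * S1u (n+1) (k+1) * x^(k+1)
        = ((-1:R)^(n-k) * S1u n k - n * ((-1:R)^(n-(k+1)) * S1u n (k+1))) * x^(k+1) := by
      intro k hk
      rw [sc_rec n k (by simpa using Nat.lt_succ_iff.mp (mem_range.mp hk))]
    rw [Finset.sum_congr rfl key]
    have shift : ∑ k ∈ Finset.range (n+1), (n:R) * ((-1:R)^(n-(k+1)) * S1u n (k+1)) * x^(k+1)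
        = ∑ k ∈ Finset.range (n+1), (n:R) * ((-1:R)^(n-k) * S1u n k) * x^k := by
      have := Finset.sum_range_succ' (fun k => (n:R) * ((-1:R)^(n-k) * S1u n k) * x^k) (n+1)
      rw [Finset.sum_range_succ (fun k => (n:R) * ((-1:R)^(n-k) * S1u n k) * x^k) (n+1)] at this
      rw [S1u_gt (Nat.lt_succ_self n)] at this
      simp only [Nat.cast_zero, mul_zero, zero_mul, add_zero, Nat.sub_zero, pow_zero, mul_one] at this
      rw [this]
      have h0 : (n:R) * ((-1:R)^n * S1u n 0) = 0 := by
        rw [show (n:R) * ((-1:R)^n * S1u n 0) = (-1:R)^n * ((n:R) * S1u n 0) by ring,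
          natmul_S1u_zero, mul_zero]
      rw [h0, add_zero]
    simp only [sub_mul]
    rw [Finset.sum_sub_distrib]
    rw [show (∑ k ∈ Finset.range (n+1), (n:R) * ((-1:R)^(n-(k+1)) * (S1u n (k+1):R)) * x^(k+1)) =
      ∑ k ∈ Finset.range (n+1), (n:R) * ((-1:R)^(n-k) * (S1u n k : R)) * x^k from shift]
    simp only [Nat.cast_zero, mul_zero, zero_mul, add_zero]
    rw [mul_sub]
    congr 1
    · rw [Finset.sum_mul]
      apply Finset.sum_congr rfl; intro k _; ring
    · rw [Finset.sum_mul]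
      apply Finset.sum_congr rfl; intro k _; ring

/-! ### The rational polynomial `∏ (X - i)` and the Bernoulli functional -/

noncomputable def SP (n : ℕ) : ℚ[X] :=
  ∑ k ∈ Finset.range (n+1), C ((-1:ℚ)^(n-k) * S1u n k) * X^k

lemma SP_eq_fall (n : ℕ) : SP n = ∏ i ∈ Finset.range n, ((X : ℚ[X]) - (i:ℚ[X])) := by
  rw [← fall_eq n (X : ℚ[X])]
  apply Finset.sum_congr rfl
  intro k _
  rw [map_mul, map_pow, map_neg, map_one, map_natCast]

lemma SP_comp (n : ℕ) : (SP (n+1)).comp (X + 1) = SP (n+1) + C ((n:ℚ)+1) * SP n := by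
  rw [SP_eq_fall, SP_eq_fall, Polynomial.prod_comp]
  simp only [sub_comp, X_comp, natCast_comp]
  rw [Finset.prod_range_succ', Finset.prod_range_succ]
  have h1 : ∀ i ∈ Finset.range n, (X + 1 - (((i+1:ℕ)):ℚ[X])) = X - (i:ℚ[X]) := by
    intro i _; push_cast; ring
  rw [Finset.prod_congr rfl h1, Nat.cast_zero, map_add, map_natCast, map_one]
  ring

lemma SP_coeff_one (n : ℕ) : (SP (n+1)).coeff 1 = (-1:ℚ)^n * (n.factorial) := by
  rw [SP, finset_sum_coeff]
  simp only [coeff_C_mul, coeff_X_pow]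
  rw [Finset.sum_eq_single 1]
  · rw [if_pos rfl, S1u_succ_one n, Nat.add_sub_cancel, mul_one]
  · intro b _ hb1
    rw [if_neg (fun h => hb1 h.symm), mul_zero]
  · intro h; exact absurd (Finset.mem_range.mpr (by omega)) h

/-- The Bernoulli umbral functional: `∑ pₖ Bₖ`. -/
noncomputable def Lb (p : ℚ[X]) : ℚ := p.sum fun k a => a * _root_.bernoulli k

lemma Lb_zero : Lb 0 = 0 := Polynomial.sum_zero_index _

lemma Lb_add (p q : ℚ[X]) : Lb (p + q) = Lb p + Lb q :=
  Polynomial.sum_add_index p q _ (fun i => zero_mul _) (fun i a b => add_mul a b _)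

lemma Lb_monomial (k : ℕ) (a : ℚ) : Lb (monomial k a) = a * _root_.bernoulli k :=
  Polynomial.sum_monomial_index a _ (zero_mul _)

lemma Lb_sum {ι : Type*} (s : Finset ι) (f : ι → ℚ[X]) :
    Lb (∑ i ∈ s, f i) = ∑ i ∈ s, Lb (f i) := by
  induction s using Finset.cons_induction with
  | empty => simpa using Lb_zero
  | cons a s ha ih => rw [Finset.sum_cons, Finset.sum_cons, Lb_add, ih]

lemma Lb_C_mul_X_pow (a : ℚ) (k : ℕ) : Lb (C a * X^k) = a * _root_.bernoulli k := by
  rw [C_mul_X_pow_eq_monomial]; exact Lb_monomial ..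

lemma Lb_SP (n : ℕ) :
    Lb (SP n) = ∑ k ∈ Finset.range (n+1), (-1:ℚ)^(n-k) * S1u n k * _root_.bernoulli k := by
  rw [SP, Lb_sum]; exact Finset.sum_congr rfl fun k _ => Lb_C_mul_X_pow ..

lemma Lb_C_mul_SP (c : ℚ) (n : ℕ) : Lb (C c * SP n) = c * Lb (SP n) := by
  rw [Lb_SP, SP, Finset.mul_sum, Lb_sum, Finset.mul_sum]
  apply Finset.sum_congr rfl
  intro k _
  rw [← mul_assoc, ← C_mul, Lb_C_mul_X_pow]; ring

lemma Lb_comp (p : ℚ[X]) : Lb (p.comp (X + 1)) = Lb p + p.coeff 1 := by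
  induction p using Polynomial.induction_on' with
  | add p q hp hq => rw [add_comp, Lb_add, hp, hq, Lb_add, coeff_add]; ring
  | monomial k a =>
    rw [monomial_comp, Lb_monomial, coeff_monomial]
    have hpow : ((X + 1 : ℚ[X]))^k = ∑ j ∈ Finset.range (k+1), C ((k.choose j : ℚ)) * X^j := by
      rw [add_pow]
      apply Finset.sum_congr rfl; intro j _
      rw [one_pow, mul_one, mul_comm]
      norm_cast
    rw [hpow, Finset.mul_sum]
    have h1 : ∀ j ∈ Finset.range (k+1),
        C a * (C ((k.choose j : ℚ)) * X^j) = C (a * (k.choose j : ℚ)) * X^j := by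
      intro j _; rw [← mul_assoc, ← C_mul]
    rw [Finset.sum_congr rfl h1, Lb_sum]
    simp only [Lb_C_mul_X_pow]
    rw [Finset.sum_range_succ, Nat.choose_self]
    have h2 : ∑ j ∈ Finset.range k, a * (k.choose j : ℚ) * _root_.bernoulli j
        = a * (if k = 1 then 1 else 0) := by
      rw [← _root_.sum_bernoulli k, Finset.mul_sum]
      apply Finset.sum_congr rfl; intros; ring
    rw [h2]
    rcases eq_or_ne k 1 with rfl | hk
    · norm_num
      ring
    · rw [if_neg hk, if_neg hk]
      push_cast
      ring

/-- The key umbral evaluation: `∑ s(n,k) Bₖ = (-1)ⁿ n! / (n+1)`. -/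
lemma Lb_SP_eq (n : ℕ) : Lb (SP n) = (-1:ℚ)^n * n.factorial / (n+1) := by
  have h1 := Lb_comp (SP (n+1))
  rw [SP_comp, Lb_add, Lb_C_mul_SP, SP_coeff_one] at h1
  have h2 : ((n:ℚ)+1) * Lb (SP n) = (-1)^n * n.factorial := by linarith
  have h3 : ((n:ℚ)+1) ≠ 0 := by positivity
  field_simp
  linarith

/-! ### Generalized binomial coefficient lemmas -/

lemma fact_ne (k : ℕ) : ((k.factorial : ℝ)) ≠ 0 := by
  exact_mod_cast Nat.factorial_ne_zero k

lemma genBinom_zero (x : ℝ) : genBinom x 0 = 1 := by simp [genBinom]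

lemma genBinom_succ (x : ℝ) (k : ℕ) :
    (x - k) * genBinom x k = ((k:ℝ)+1) * genBinom x (k+1) := by
  rw [genBinom, genBinom, Finset.prod_range_succ, Nat.factorial_succ]
  have h1 := fact_ne k
  have h2 : ((k:ℝ)+1) ≠ 0 := by positivity
  field_simp
  push_cast
  ring

lemma fact_mul_genBinom (x : ℝ) (n : ℕ) :
    (n.factorial : ℝ) * genBinom x n = ∏ i ∈ Finset.range n, (x - i) := by
  rw [genBinom, mul_div_cancel₀]
  exact fact_ne n

lemma genBinom_pascal (x : ℝ) (k : ℕ) :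
    genBinom (x+1) (k+1) - genBinom x (k+1) = genBinom x k := by
  have hprod : ∏ i ∈ Finset.range (k+1), (x + 1 - i)
      = (x+1) * ∏ i ∈ Finset.range k, (x - i) := by
    rw [Finset.prod_range_succ']
    have h1 : ∀ i ∈ Finset.range k, (x + 1 - ((i+1:ℕ):ℝ)) = x - i := by
      intro i _; push_cast; ring
    rw [Finset.prod_congr rfl h1, Nat.cast_zero, sub_zero, mul_comm]
  rw [genBinom, genBinom, genBinom, hprod, Finset.prod_range_succ, Nat.factorial_succ]
  have h1 := fact_ne k
  have h2 : ((k:ℝ)+1) ≠ 0 := by positivity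
  push_cast
  field_simp
  ring

lemma genBinom_at_zero (k : ℕ) : genBinom 0 (k+1) = 0 := by
  rw [genBinom, Finset.prod_eq_zero (Finset.mem_range.mpr (Nat.succ_pos k)) (by simp), zero_div]

/-! ### The difference identity -/

lemma rstep (n : ℕ) (x : ℝ) :
    (((n+1).factorial : ℝ)) * ∑ k ∈ Finset.range (n+1), genBinom x k * (-1:ℝ)^(n-k) / ((n:ℝ)+1-k)
      = (x - n) * ((n.factorial : ℝ) * ∑ k ∈ Finset.range n, genBinom x k * (-1:ℝ)^(n-1-k) / ((n:ℝ)-k))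
        + (n.factorial : ℝ) * genBinom x n := by
  have hfac : (((n+1).factorial : ℝ)) = ((n:ℝ)+1) * n.factorial := by
    rw [Nat.factorial_succ]; push_cast; ring
  have hL : (((n+1).factorial : ℝ)) * ∑ k ∈ Finset.range (n+1), genBinom x k * (-1:ℝ)^(n-k) / ((n:ℝ)+1-k)
      = (n.factorial:ℝ) * (∑ k ∈ Finset.range (n+1), ((-1:ℝ)^(n-k) * ((k:ℝ)/((n:ℝ)+1-k)) * genBinom x k
          + (-1:ℝ)^(n-k) * genBinom x k)) := by
    rw [hfac, mul_comm ((n:ℝ)+1), mul_assoc]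
    congr 1
    rw [Finset.mul_sum]
    apply Finset.sum_congr rfl
    intro k hk
    have hk' : (k:ℝ) ≤ n := by exact_mod_cast Nat.lt_succ_iff.mp (Finset.mem_range.mp hk)
    have hne : (n:ℝ)+1-k ≠ 0 := by linarith
    field_simp
    ring
  rw [hL, Finset.sum_add_distrib]
  have hS1 : ∑ k ∈ Finset.range (n+1), (-1:ℝ)^(n-k) * ((k:ℝ)/((n:ℝ)+1-k)) * genBinom x k
      = ∑ k ∈ Finset.range n, (-1:ℝ)^(n-1-k) * (((k:ℝ)+1)/((n:ℝ)-k)) * genBinom x (k+1) := by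
    rw [Finset.sum_range_succ']
    rw [Nat.cast_zero, zero_div, mul_zero, zero_mul, add_zero]
    apply Finset.sum_congr rfl
    intro k _
    have he : n - (k+1) = n - 1 - k := by omega
    have hc : ((n:ℝ)+1-((k+1:ℕ):ℝ)) = (n:ℝ) - k := by push_cast; ring
    rw [he, hc]
    push_cast
    ring
  have hS2 : ∑ k ∈ Finset.range (n+1), (-1:ℝ)^(n-k) * genBinom x k
      = (∑ k ∈ Finset.range n, (-1:ℝ)^(n-k) * genBinom x k) + genBinom x n := by
    rw [Finset.sum_range_succ, Nat.sub_self, pow_zero, one_mul]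
  rw [hS1, hS2]
  have hR : (x - (n:ℝ)) * ((n.factorial : ℝ) * ∑ k ∈ Finset.range n, genBinom x k * (-1:ℝ)^(n-1-k) / ((n:ℝ)-k))
      = (n.factorial:ℝ) * ∑ k ∈ Finset.range n, ((-1:ℝ)^(n-1-k) * (((k:ℝ)+1)/((n:ℝ)-k)) * genBinom x (k+1)
          + (-1:ℝ)^(n-k) * genBinom x k) := by
    rw [mul_left_comm]
    congr 1
    rw [Finset.mul_sum]
    apply Finset.sum_congr rfl
    intro k hk
    have hkn : k < n := Finset.mem_range.mp hk
    have hk' : (k:ℝ) < n := by exact_mod_cast hkn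
    have hne : (n:ℝ)-k ≠ 0 := by linarith
    have hsign : (-1:ℝ)^(n-k) = -(-1:ℝ)^(n-1-k) := by
      rw [show n-k = (n-1-k)+1 by omega, pow_succ]; ring
    have hgb := genBinom_succ x k
    rw [hsign]
    field_simp
    linear_combination hgb
  rw [hR, Finset.sum_add_distrib]
  ring

lemma lstep (n : ℕ) (x : ℝ) :
    ∑ k ∈ Finset.range (n+2), (-1:ℝ)^(n+1-k) * S1u (n+1) k * ((k:ℝ) * x^(k-1))
      = (x - n) * ∑ k ∈ Finset.range (n+1), (-1:ℝ)^(n-k) * S1u n k * ((k:ℝ) * x^(k-1))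
        + ∏ i ∈ Finset.range n, (x - i) := by
  have hshift : ∑ k ∈ Finset.range (n+1),
        (-1:ℝ)^(n-(k+1)) * S1u n (k+1) * (((k+1:ℕ):ℝ) * x^(k+1-1))
      = ∑ k ∈ Finset.range (n+1), (-1:ℝ)^(n-k) * S1u n k * ((k:ℝ) * x^(k-1)) := by
    have h1 := Finset.sum_range_succ'
      (fun k => (-1:ℝ)^(n-k) * (S1u n k : ℝ) * ((k:ℝ) * x^(k-1))) (n+1)
    have h2 := Finset.sum_range_succ
      (fun k => (-1:ℝ)^(n-k) * (S1u n k : ℝ) * ((k:ℝ) * x^(k-1))) (n+1)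
    rw [h2] at h1
    simp only [S1u_gt (Nat.lt_succ_self n), Nat.cast_zero, zero_mul, mul_zero, add_zero] at h1
    exact h1.symm
  rw [Finset.sum_range_succ']
  simp only [Nat.cast_zero, zero_mul, mul_zero, add_zero]
  have key : ∀ k ∈ Finset.range (n+1),
      (-1:ℝ)^(n+1-(k+1)) * S1u (n+1) (k+1) * (((k+1:ℕ):ℝ) * x^(k+1-1))
      = x * ((-1:ℝ)^(n-k) * S1u n k * ((k:ℝ) * x^(k-1)))
        + (-1:ℝ)^(n-k) * S1u n k * x^k
        - (n:ℝ) * ((-1:ℝ)^(n-(k+1)) * S1u n (k+1) * (((k+1:ℕ):ℝ) * x^(k+1-1))) := by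
    intro k hk
    rw [sc_rec n k (Nat.lt_succ_iff.mp (Finset.mem_range.mp hk))]
    cases k with
    | zero => push_cast; norm_num
    | succ m =>
      simp only [Nat.add_sub_cancel]
      push_cast
      ring
  rw [Finset.sum_congr rfl key]
  simp only [Finset.sum_add_distrib, Finset.sum_sub_distrib, ← Finset.mul_sum]
  rw [hshift, fall_eq]
  ring

lemma deltaSum (n : ℕ) (x : ℝ) :
    ∑ k ∈ Finset.range (n+1), (-1:ℝ)^(n-k) * S1u n k * ((k:ℝ) * x^(k-1))
      = (n.factorial:ℝ) * ∑ k ∈ Finset.range n, genBinom x k * (-1:ℝ)^(n-1-k) / ((n:ℝ)-k) := by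
  induction n with
  | zero => simp
  | succ n ih =>
    have h1 : ((n:ℝ)+1) = ((n+1:ℕ):ℝ) := by push_cast; ring
    have h2 : ∀ k, (n+1) - 1 - k = n - k := fun k => by omega
    calc ∑ k ∈ Finset.range (n+1+1), (-1:ℝ)^(n+1-k) * S1u (n+1) k * ((k:ℝ) * x^(k-1))
        = (x - n) * ∑ k ∈ Finset.range (n+1), (-1:ℝ)^(n-k) * S1u n k * ((k:ℝ) * x^(k-1))
          + ∏ i ∈ Finset.range n, (x - i) := lstep n x
      _ = (x - n) * ((n.factorial:ℝ) * ∑ k ∈ Finset.range n, genBinom x k * (-1:ℝ)^(n-1-k) / ((n:ℝ)-k))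
          + (n.factorial:ℝ) * genBinom x n := by rw [ih, fact_mul_genBinom]
      _ = (((n+1).factorial : ℝ)) * ∑ k ∈ Finset.range (n+1), genBinom x k * (-1:ℝ)^(n-k) / ((n:ℝ)+1-k) :=
          (rstep n x).symm
      _ = ((n+1).factorial:ℝ) * ∑ k ∈ Finset.range (n+1), genBinom x k * (-1:ℝ)^(n+1-1-k) / (((n+1:ℕ):ℝ)-k) := by
          rw [← h1]
          apply congrArg
          apply Finset.sum_congr rfl
          intro k _
          rw [h2 k]

/-! ### Bernoulli polynomial shift over ℝ -/

lemma bshift_poly (k : ℕ) : (Polynomial.bernoulli k).comp (X + 1)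
    = Polynomial.bernoulli k + (k:ℚ[X]) * X^(k-1) := by
  apply Polynomial.funext
  intro r
  rw [eval_comp]
  simp only [eval_add, eval_X, eval_one, eval_mul, eval_pow, eval_natCast]
  rw [show r + 1 = 1 + r by ring, Polynomial.bernoulli_eval_one_add]

lemma bern_shift (k : ℕ) (x : ℝ) :
    (Polynomial.aeval (x+1)) (Polynomial.bernoulli k)
      = (Polynomial.aeval x) (Polynomial.bernoulli k) + (k:ℝ) * x^(k-1) := by
  have h := congrArg (Polynomial.aeval x : ℚ[X] →ₐ[ℚ] ℝ) (bshift_poly k)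
  simp only [Polynomial.aeval_comp, map_add, map_mul, map_pow, map_natCast, aeval_X, map_one] at h
  convert h using 2

lemma const_of_shift {p : ℝ[X]} (h : ∀ y : ℝ, p.eval (y+1) = p.eval y) (x : ℝ) :
    p.eval x = p.eval 0 := by
  have hm : ∀ m : ℕ, p.eval (m:ℝ) = p.eval 0 := by
    intro m; induction m with
    | zero => norm_num
    | succ m ih => push_cast; rw [h]; exact ih
  have hroot : p - C (p.eval 0) = 0 := by
    apply Polynomial.eq_zero_of_infinite_isRoot
    refine Set.Infinite.mono ?_ (Set.infinite_range_of_injective (Nat.cast_injective (R := ℝ)))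
    rintro y ⟨m, rfl⟩
    simp [Polynomial.IsRoot, hm m]
  have h2 := congrArg (Polynomial.eval x) hroot
  simp at h2
  linarith

/-! ### The difference polynomial -/

noncomputable def LR (n : ℕ) : ℝ[X] :=
  (∑ k ∈ Finset.range (n+1), C ((-1:ℝ)^(n-k) * S1u n k) * (Polynomial.bernoulli k).map (algebraMap ℚ ℝ))
  - C ((n.factorial:ℝ)) * ∑ k ∈ Finset.range (n+1),
      C ((-1:ℝ)^(n-k) / ((n:ℝ)-k+1) * ((k.factorial:ℝ))⁻¹) * ∏ i ∈ Finset.range k, (X - C (i:ℝ))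

lemma eval_LR (n : ℕ) (x : ℝ) : (LR n).eval x
    = (∑ k ∈ Finset.range (n+1), ((-1:ℝ)^(n-k) * S1u n k) * (Polynomial.aeval x) (Polynomial.bernoulli k))
      - (n.factorial:ℝ) * ∑ k ∈ Finset.range (n+1), genBinom x k * (-1:ℝ)^(n-k) / ((n:ℝ)-k+1) := by
  rw [LR, eval_sub, eval_finset_sum, eval_mul, eval_C, eval_finset_sum]
  congr 1
  · apply Finset.sum_congr rfl; intro k _
    rw [eval_mul, eval_C, Polynomial.eval_map, ← Polynomial.aeval_def]
  · congr 1
    apply Finset.sum_congr rfl; intro k _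
    rw [eval_mul, eval_C, eval_prod]
    simp only [eval_sub, eval_X, eval_C]
    rw [genBinom]
    ring

lemma LR_per (n : ℕ) (y : ℝ) : (LR n).eval (y+1) = (LR n).eval y := by
  rw [eval_LR, eval_LR]
  have hb : ∑ k ∈ Finset.range (n+1), ((-1:ℝ)^(n-k) * S1u n k) * (Polynomial.aeval (y+1)) (Polynomial.bernoulli k)
      = ∑ k ∈ Finset.range (n+1), ((-1:ℝ)^(n-k) * S1u n k) * (Polynomial.aeval y) (Polynomial.bernoulli k)
        + ∑ k ∈ Finset.range (n+1), (-1:ℝ)^(n-k) * S1u n k * ((k:ℝ) * y^(k-1)) := by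
    rw [← Finset.sum_add_distrib]
    apply Finset.sum_congr rfl; intro k _
    rw [bern_shift]; ring
  have hg : ∑ k ∈ Finset.range (n+1), genBinom (y+1) k * (-1:ℝ)^(n-k) / ((n:ℝ)-k+1)
      = ∑ k ∈ Finset.range (n+1), genBinom y k * (-1:ℝ)^(n-k) / ((n:ℝ)-k+1)
        + ∑ k ∈ Finset.range n, genBinom y k * (-1:ℝ)^(n-1-k) / ((n:ℝ)-k) := by
    have hdiff : ∑ k ∈ Finset.range (n+1), (genBinom (y+1) k - genBinom y k) * ((-1:ℝ)^(n-k) / ((n:ℝ)-k+1))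
        = ∑ k ∈ Finset.range n, genBinom y k * (-1:ℝ)^(n-1-k) / ((n:ℝ)-k) := by
      rw [Finset.sum_range_succ']
      rw [genBinom_zero, genBinom_zero, sub_self, zero_mul, add_zero]
      apply Finset.sum_congr rfl
      intro k _
      rw [genBinom_pascal, show n-(k+1) = n-1-k by omega]
      push_cast
      ring
    have hsplit : ∑ k ∈ Finset.range (n+1), (genBinom (y+1) k - genBinom y k) * ((-1:ℝ)^(n-k) / ((n:ℝ)-k+1))
        = (∑ k ∈ Finset.range (n+1), genBinom (y+1) k * (-1:ℝ)^(n-k) / ((n:ℝ)-k+1))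
          - ∑ k ∈ Finset.range (n+1), genBinom y k * (-1:ℝ)^(n-k) / ((n:ℝ)-k+1) := by
      rw [← Finset.sum_sub_distrib]
      apply Finset.sum_congr rfl; intro k _; ring
    rw [hsplit] at hdiff
    linarith
  rw [hb, hg, deltaSum n y]
  ring

theorem stirling1_bernoulli_poly_transform (n : ℕ) (x : ℝ) :
    ∑ k ∈ Finset.range (n + 1),
      ((-1 : ℝ) ^ (n - k) * S1u n k) * (Polynomial.aeval x) (Polynomial.bernoulli k) =
      (Nat.factorial n : ℝ) *
        ∑ k ∈ Finset.range (n + 1), genBinom x k * (-1) ^ (n - k) / ((n : ℝ) - k + 1) := by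
  have hc := const_of_shift (LR_per n) x
  have h0 : (LR n).eval 0 = 0 := by
    rw [eval_LR]
    have hb0 : ∀ k : ℕ, (Polynomial.aeval (0:ℝ)) (Polynomial.bernoulli k)
        = algebraMap ℚ ℝ (_root_.bernoulli k) := by
      intro k
      rw [Polynomial.aeval_def, Polynomial.eval₂_at_zero, Polynomial.coeff_zero_eq_eval_zero,
        Polynomial.bernoulli_eval_zero]
    have hq := Lb_SP_eq n
    rw [Lb_SP] at hq
    have hL := congrArg (algebraMap ℚ ℝ) hq
    simp only [map_sum, map_mul, map_pow, map_neg, map_one, map_natCast, map_div₀, map_add] at hL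
    have hLH : ∑ k ∈ Finset.range (n+1), ((-1:ℝ)^(n-k) * S1u n k) * (Polynomial.aeval (0:ℝ)) (Polynomial.bernoulli k)
        = (-1:ℝ)^n * n.factorial / ((n:ℝ)+1) := by
      rw [← hL]
      apply Finset.sum_congr rfl
      intro k _
      rw [hb0 k]
    have hRH : ∑ k ∈ Finset.range (n+1), genBinom 0 k * (-1:ℝ)^(n-k) / ((n:ℝ)-k+1)
        = (-1:ℝ)^n / ((n:ℝ)+1) := by
      rw [Finset.sum_range_succ']
      have hz : ∀ k ∈ Finset.range n,
          genBinom 0 (k+1) * (-1:ℝ)^(n-(k+1)) / ((n:ℝ)-((k+1:ℕ):ℝ)+1) = 0 := by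
        intro k _
        rw [genBinom_at_zero, zero_mul, zero_div]
      rw [Finset.sum_eq_zero hz, zero_add, genBinom_zero, Nat.sub_zero, Nat.cast_zero, one_mul,
        sub_zero]
    rw [hLH, hRH]
    ring
  rw [h0, eval_LR] at hc
  linarith
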